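/- For every fixed t̄ ∈ (0,1), the one-sided limit lim_{r→0⁺} (1/r) · ∫_{(0,1)²} 1_{{|y(x) − t̄| < r}} ( |∂₁y(x)| + |∂₂y(x)| ) dx exists and equals 8 · (1 − (2/π)·arcsin t̄). -/

import Mathlib

set_option maxHeartbeats 1000000

open Real MeasureTheory Filter Set

/-- `y(x₁,x₂) = sin(π x₁) sin(π x₂)`. -/
noncomputable def ybar (x : ℝ × ℝ) : ℝ := Real.sin (π * x.1) * Real.sin (π * x.2)

/-- `∂₁ y (x₁,x₂) = π cos(π x₁) sin(π x₂)`. -/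
noncomputable def d1y (x : ℝ × ℝ) : ℝ := π * Real.cos (π * x.1) * Real.sin (π * x.2)

/-- `∂₂ y (x₁,x₂) = π sin(π x₁) cos(π x₂)`. -/
noncomputable def d2y (x : ℝ × ℝ) : ℝ := π * Real.sin (π * x.1) * Real.cos (π * x.2)

noncomputable def Mfun (c : ℝ) : ℝ :=
  2/π*(1 - Real.sqrt (1 - c^2)) + c - 2/π * (c * Real.arcsin c)

lemma Mderiv {c : ℝ} (h0 : -1 < c) (h1 : c < 1) :
    HasDerivAt Mfun (1 - 2/π * Real.arcsin c) c := by
  have hc2 : (0:ℝ) < 1 - c^2 := by nlinarith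
  have hsp : 0 < Real.sqrt (1 - c^2) := Real.sqrt_pos.mpr hc2
  have hin : HasDerivAt (fun c : ℝ => 1 - c^2) (-(2*c)) c := by
    simpa using ((hasDerivAt_pow 2 c).const_sub 1)
  have hsqrt : HasDerivAt (fun c : ℝ => Real.sqrt (1 - c^2))
      (-(2*c) / (2 * Real.sqrt (1 - c^2))) c := hin.sqrt hc2.ne'
  have harc : HasDerivAt Real.arcsin (1 / Real.sqrt (1 - c^2)) c :=
    Real.hasDerivAt_arcsin h0.ne' h1.ne
  have hmul : HasDerivAt (fun c : ℝ => c * Real.arcsin c)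
      (1 * Real.arcsin c + c * (1 / Real.sqrt (1 - c^2))) c :=
    (hasDerivAt_id c).mul harc
  have h := (((hsqrt.const_sub 1).const_mul (2/π)).add (hasDerivAt_id c)).sub
    (hmul.const_mul (2/π))
  convert h using 1
  · rfl
  · rfl
  · rfl
  field_simp
  ring

lemma Mint {c : ℝ} (h0 : 0 ≤ c) (h1 : c ≤ 1) :
    ∫ x in Set.Ioo (0:ℝ) 1, min (Real.sin (π*x)) c = Mfun c := by
  have hπ := Real.pi_pos
  have ha0 : 0 ≤ Real.arcsin c := Real.arcsin_nonneg.mpr h0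
  have ha2 : Real.arcsin c ≤ π/2 := Real.arcsin_le_pi_div_two c
  set a : ℝ := Real.arcsin c / π with ha
  have ha0' : 0 ≤ a := div_nonneg ha0 hπ.le
  have ha12 : a ≤ 1/2 := by rw [ha, div_le_iff₀ hπ]; linarith
  have hπa : π * a = Real.arcsin c := by rw [ha]; field_simp
  have hsa : Real.sin (π * a) = c := by rw [hπa]; exact Real.sin_arcsin (by linarith) h1
  have hca : Real.cos (π * a) = Real.sqrt (1 - c^2) := by rw [hπa]; exact Real.cos_arcsin c
  set f : ℝ → ℝ := fun x => min (Real.sin (π*x)) c with hf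
  have hcont : Continuous f := by
    apply Continuous.min _ continuous_const
    exact Real.continuous_sin.comp (continuous_const.mul continuous_id)
  -- piece 1
  have hmono := Real.strictMonoOn_sin.monotoneOn
  have p1 : ∫ x in (0:ℝ)..a, f x = (1 - Real.sqrt (1-c^2))/π := by
    have hcg : ∀ x ∈ Set.uIcc (0:ℝ) a, f x = Real.sin (π*x) := by
      intro x hx
      rw [Set.uIcc_of_le ha0'] at hx
      apply min_eq_left
      calc Real.sin (π*x) ≤ Real.sin (π*a) := by
            apply hmono _ _ (by nlinarith [hx.1, hx.2] : π*x ≤ π*a)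
            · constructor <;> nlinarith [hx.1, hx.2]
            · constructor <;> nlinarith
        _ = c := hsa
    rw [intervalIntegral.integral_congr hcg,
      intervalIntegral.integral_comp_mul_left (fun x => Real.sin x) hπ.ne']
    simp [integral_sin, hca]
    ring
  -- piece 2
  have p2 : ∫ x in a..(1-a), f x = c * (1 - 2*a) := by
    have hcg : ∀ x ∈ Set.uIcc a (1-a), f x = c := by
      intro x hx
      rw [Set.uIcc_of_le (by linarith)] at hx
      apply min_eq_right
      rcases le_or_gt (π*x) (π/2) with hle | hlt
      · calc c = Real.sin (π*a) := hsa.symm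
          _ ≤ Real.sin (π*x) := by
            apply hmono _ _ (by nlinarith [hx.1] : π*a ≤ π*x)
            · constructor <;> nlinarith
            · constructor <;> nlinarith [hx.1, hx.2]
      · calc c = Real.sin (π*a) := hsa.symm
          _ ≤ Real.sin (π - π*x) := by
            apply hmono _ _ (by nlinarith [hx.2] : π*a ≤ π - π*x)
            · constructor <;> nlinarith
            · constructor <;> nlinarith [hx.1, hx.2]
          _ = Real.sin (π*x) := Real.sin_pi_sub _
    rw [intervalIntegral.integral_congr hcg]
    simp
    ring
  -- piece 3
  have p3 : ∫ x in (1-a)..1, f x = (1 - Real.sqrt (1-c^2))/π := by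
    have hsub := intervalIntegral.integral_comp_sub_left (a:=0) (b:=a) f 1
    simp only [sub_zero] at hsub
    rw [← hsub, ← p1]
    apply intervalIntegral.integral_congr
    intro x hx
    simp only [hf, mul_one_sub, mul_one]
    rw [Real.sin_pi_sub]
  have hi1 : IntervalIntegrable f volume 0 a := hcont.intervalIntegrable _ _
  have hi2 : IntervalIntegrable f volume a (1-a) := hcont.intervalIntegrable _ _
  have hi3 : IntervalIntegrable f volume (1-a) 1 := hcont.intervalIntegrable _ _
  have key : ∫ x in (0:ℝ)..1, f x = Mfun c := by
    rw [← intervalIntegral.integral_add_adjacent_intervals hi1 (hi2.trans hi3),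
      ← intervalIntegral.integral_add_adjacent_intervals hi2 hi3, p1, p2, p3]
    rw [Mfun, ha]
    field_simp
    ring
  rw [← key, intervalIntegral.integral_of_le (by norm_num : (0:ℝ) ≤ 1),
    MeasureTheory.integral_Ioc_eq_integral_Ioo]

lemma int_congr_Ioo {f g : ℝ → ℝ} {a b : ℝ} (hab : a ≤ b)
    (h : ∀ x ∈ Set.Ioo a b, f x = g x) :
    ∫ x in a..b, f x = ∫ x in a..b, g x := by
  apply intervalIntegral.integral_congr_ae
  have hb : ∀ᵐ x : ℝ, x ≠ b :=
    MeasureTheory.compl_mem_ae_iff.mpr (Real.volume_singleton)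
  filter_upwards [hb] with x hxb hx
  rw [Set.uIoc_of_le hab] at hx
  exact h x ⟨hx.1, lt_of_le_of_ne hx.2 hxb⟩

lemma inner_int {s t r : ℝ} (hs0 : 0 < s) (hs1 : s ≤ 1) (hr : 0 < r) (htr : 0 < t - r) :
    ∫ x in Set.Ioo (0:ℝ) 1,
      (if |Real.sin (π*x) * s - t| < r then π * |Real.cos (π*x)| * s else 0)
      = 2*(min s (t+r) - min s (t-r)) := by
  have hπ := Real.pi_pos
  set g : ℝ → ℝ := fun x =>
    (if |Real.sin (π*x) * s - t| < r then π * |Real.cos (π*x)| * s else 0) with hg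
  set α : ℝ := min 1 ((t-r)/s) with hα
  set β : ℝ := min 1 ((t+r)/s) with hβ
  have hα0 : 0 < α := lt_min one_pos (div_pos htr hs0)
  have hαβ : α ≤ β := by
    apply min_le_min le_rfl
    gcongr
    linarith
  have hα1 : α ≤ 1 := min_le_left _ _
  have hβ1 : β ≤ 1 := min_le_left _ _
  have hβ0 : 0 < β := lt_of_lt_of_le hα0 hαβ
  set A : ℝ := Real.arcsin α / π with hA
  set B : ℝ := Real.arcsin β / π with hB
  have hA0 : 0 ≤ A := div_nonneg (Real.arcsin_nonneg.mpr hα0.le) hπ.le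
  have hAB : A ≤ B := by
    rw [hA, hB]
    gcongr
  have hB12 : B ≤ 1/2 := by
    rw [hB, div_le_iff₀ hπ]
    have := Real.arcsin_le_pi_div_two β
    linarith
  have hπA : π * A = Real.arcsin α := by rw [hA]; field_simp
  have hπB : π * B = Real.arcsin β := by rw [hB]; field_simp
  have hsA : Real.sin (π * A) = α := by rw [hπA]; exact Real.sin_arcsin (by linarith) hα1
  have hsB : Real.sin (π * B) = β := by rw [hπB]; exact Real.sin_arcsin (by linarith) hβ1
  have hmono := Real.strictMonoOn_sin
  have hcond : ∀ x : ℝ, (|Real.sin (π*x) * s - t| < r ↔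
      (t-r)/s < Real.sin (π*x) ∧ Real.sin (π*x) < (t+r)/s) := by
    intro x
    rw [abs_lt, div_lt_iff₀ hs0, lt_div_iff₀ hs0]
    constructor <;> intro h <;> constructor <;> linarith [h.1, h.2]
  have hgmeas : Measurable g := by
    apply Measurable.ite _ (by fun_prop) measurable_const
    exact measurableSet_lt (by fun_prop) measurable_const
  have hgint : ∀ a b : ℝ, IntervalIntegrable g volume a b := by
    intro a b
    rw [intervalIntegrable_iff]
    apply MeasureTheory.Integrable.mono' (g := fun _ : ℝ => π)
    · exact integrableOn_const measure_Ioc_lt_top.ne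
    · exact hgmeas.aestronglyMeasurable.restrict
    · filter_upwards with x
      simp only [hg, Real.norm_eq_abs]
      split
      · rw [abs_of_nonneg (by positivity)]
        calc π * |Real.cos (π*x)| * s ≤ π * |Real.cos (π*x)| * 1 :=
              mul_le_mul_of_nonneg_left hs1 (by positivity)
          _ = π * |Real.cos (π*x)| := mul_one _
          _ ≤ π * 1 := mul_le_mul_of_nonneg_left (abs_cos_le_one _) hπ.le
          _ = π := mul_one _
      · simp [hπ.le]
  -- piece 1 : (0, A) gives 0
  have p1 : ∫ x in (0:ℝ)..A, g x = 0 := by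
    rw [int_congr_Ioo hA0 (g := fun _ => (0:ℝ)) ?_, intervalIntegral.integral_const,
      smul_zero]
    intro x hx
    simp only [hg]
    rw [if_neg]
    rw [hcond, not_and_or]
    left
    push_neg
    have harc := Real.arcsin_le_pi_div_two α
    calc Real.sin (π*x) ≤ Real.sin (π*A) := by
          apply (hmono.monotoneOn) _ _ (by nlinarith [hx.2] : π*x ≤ π*A)
          · constructor <;> nlinarith [hx.1, hx.2, hπA]
          · constructor <;> nlinarith [hπA]
      _ = α := hsA
      _ ≤ (t-r)/s := min_le_right _ _
  -- piece 2 : (A, B)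
  have p2 : ∫ x in A..B, g x = s * (β - α) := by
    rw [int_congr_Ioo hAB (g := fun x => π * Real.cos (π*x) * s) ?_]
    · have e1 : ∀ x : ℝ, π * Real.cos (π*x) * s = (π*s) * Real.cos (π*x) := by
        intro x; ring
      simp only [e1]
      rw [intervalIntegral.integral_const_mul,
        intervalIntegral.integral_comp_mul_left (fun y => Real.cos y) hπ.ne']
      simp only [integral_cos, smul_eq_mul, hsA, hsB]
      field_simp
    · intro x hx
      have hx0 : 0 < x := lt_of_le_of_lt hA0 hx.1
      have hx12 : x < 1/2 := lt_of_lt_of_le hx.2 hB12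
      have hcos : 0 ≤ Real.cos (π*x) :=
        Real.cos_nonneg_of_mem_Icc ⟨by nlinarith, by nlinarith⟩
      have hαlt : α < 1 := by
        by_contra hcon
        push_neg at hcon
        have hα1' : α = 1 := le_antisymm hα1 hcon
        have : A = 1/2 := by
          rw [hA, hα1', Real.arcsin_one]; field_simp
        linarith [hx.1, hx.2, hB12, this]
      have hαval : α = (t-r)/s := by
        rw [hα]; apply min_eq_right
        by_contra hcon
        push_neg at hcon
        rw [hα, min_eq_left hcon.le] at hαlt
        exact lt_irrefl _ hαlt
      simp only [hg]
      rw [if_pos, abs_of_nonneg hcos]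
      rw [hcond]
      constructor
      · rw [← hαval, ← hsA]
        apply hmono _ _ (by nlinarith [hx.1] : π*A < π*x)
        · constructor <;> nlinarith [hπA, Real.arcsin_le_pi_div_two α]
        · constructor <;> nlinarith
      · calc Real.sin (π*x) < Real.sin (π*B) := by
              apply hmono _ _ (by nlinarith [hx.2] : π*x < π*B)
              · constructor <;> nlinarith
              · constructor <;> nlinarith [hπB, Real.arcsin_le_pi_div_two β]
          _ = β := hsB
          _ ≤ (t+r)/s := min_le_right _ _
  -- piece 3 : (B, 1/2) gives 0
  have p3 : ∫ x in B..(1/2:ℝ), g x = 0 := by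
    rw [int_congr_Ioo hB12 (g := fun _ => (0:ℝ)) ?_, intervalIntegral.integral_const,
      smul_zero]
    intro x hx
    have hxB : B < x := hx.1
    have hx0 : 0 < x := lt_of_le_of_lt (hA0.trans hAB) hxB
    have hx12 : x < 1/2 := hx.2
    have hβlt : β < 1 := by
      by_contra hcon
      push_neg at hcon
      have hβ1' : β = 1 := le_antisymm hβ1 hcon
      have : B = 1/2 := by
        rw [hB, hβ1', Real.arcsin_one]; field_simp
      linarith
    have hβval : β = (t+r)/s := by
      rw [hβ]; apply min_eq_right
      by_contra hcon
      push_neg at hcon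
      rw [hβ, min_eq_left hcon.le] at hβlt
      exact lt_irrefl _ hβlt
    simp only [hg]
    rw [if_neg]
    rw [hcond, not_and_or]
    right
    push_neg
    rw [← hβval, ← hsB]
    apply le_of_lt
    apply hmono _ _ (by nlinarith : π*B < π*x)
    · constructor <;> nlinarith [hπB, Real.arcsin_le_pi_div_two β]
    · constructor <;> nlinarith
  -- first half
  have hhalf1 : ∫ x in (0:ℝ)..(1/2:ℝ), g x = s * (β - α) := by
    rw [← intervalIntegral.integral_add_adjacent_intervals (hgint 0 A) (hgint A (1/2)),
      ← intervalIntegral.integral_add_adjacent_intervals (hgint A B) (hgint B (1/2)),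
      p1, p2, p3]
    ring
  -- symmetry
  have hsym : ∀ x : ℝ, g (1 - x) = g x := by
    intro x
    simp only [hg]
    have e : π * (1 - x) = π - π*x := by ring
    rw [e, Real.sin_pi_sub, Real.cos_pi_sub, abs_neg]
  have hhalf2 : ∫ x in (1/2:ℝ)..1, g x = s * (β - α) := by
    have hsub := intervalIntegral.integral_comp_sub_left (a := 0) (b := 1/2) g 1
    simp only [sub_zero, show (1:ℝ)-1/2 = 1/2 by norm_num] at hsub
    rw [← hsub]
    simp only [hsym]
    exact hhalf1
  have htot : ∫ x in (0:ℝ)..1, g x = 2 * (s*β - s*α) := by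
    rw [← intervalIntegral.integral_add_adjacent_intervals (hgint 0 (1/2)) (hgint (1/2) 1),
      hhalf1, hhalf2]
    ring
  have hsβ : s * β = min s (t+r) := by
    rw [hβ, mul_min_of_nonneg _ _ hs0.le, mul_one, mul_div_cancel₀ _ hs0.ne']
  have hsα : s * α = min s (t-r) := by
    rw [hα, mul_min_of_nonneg _ _ hs0.le, mul_one, mul_div_cancel₀ _ hs0.ne']
  rw [intervalIntegral.integral_of_le (by norm_num : (0:ℝ) ≤ 1),
    MeasureTheory.integral_Ioc_eq_integral_Ioo] at htot
  rw [htot, hsβ, hsα]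

lemma Gval {t r : ℝ} (hr : 0 < r) (hrt : r < t) (htr1 : t + r < 1) :
    ∫ x in Set.Ioo (0:ℝ) 1 ×ˢ Set.Ioo (0:ℝ) 1,
      (if |ybar x - t| < r then |d1y x| + |d2y x| else 0)
      = 4 * (Mfun (t+r) - Mfun (t-r)) := by
  have hπ := Real.pi_pos
  have htr : 0 < t - r := by linarith
  set S : Set ℝ := Set.Ioo (0:ℝ) 1 with hS
  set ρ : Measure ℝ := volume.restrict S with hρ
  haveI : IsFiniteMeasure ρ := by
    constructor
    rw [hρ, Measure.restrict_apply_univ, hS, Real.volume_Ioo]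
    exact ENNReal.ofReal_lt_top
  have hyc : Continuous ybar := by unfold ybar; fun_prop
  have h1c : Continuous d1y := by unfold d1y; fun_prop
  have h2c : Continuous d2y := by unfold d2y; fun_prop
  have hcondm : MeasurableSet {x : ℝ×ℝ | |ybar x - t| < r} :=
    measurableSet_lt ((hyc.sub continuous_const).abs.measurable) measurable_const
  set f1 : ℝ×ℝ → ℝ := fun x => if |ybar x - t| < r then |d1y x| else 0 with hf1
  set f2 : ℝ×ℝ → ℝ := fun x => if |ybar x - t| < r then |d2y x| else 0 with hf2
  have hb1 : ∀ x, |d1y x| ≤ π := by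
    intro x; unfold d1y
    rw [abs_mul, abs_mul, abs_of_pos hπ]
    calc π * |Real.cos (π*x.1)| * |Real.sin (π*x.2)| ≤ π * |Real.cos (π*x.1)| * 1 :=
          mul_le_mul_of_nonneg_left (Real.abs_sin_le_one _) (by positivity)
      _ = π * |Real.cos (π*x.1)| := mul_one _
      _ ≤ π * 1 := mul_le_mul_of_nonneg_left (Real.abs_cos_le_one _) hπ.le
      _ = π := mul_one _
  have hb2 : ∀ x, |d2y x| ≤ π := by
    intro x; unfold d2y
    rw [abs_mul, abs_mul, abs_of_pos hπ]
    calc π * |Real.sin (π*x.1)| * |Real.cos (π*x.2)| ≤ π * |Real.sin (π*x.1)| * 1 :=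
          mul_le_mul_of_nonneg_left (Real.abs_cos_le_one _) (by positivity)
      _ = π * |Real.sin (π*x.1)| := mul_one _
      _ ≤ π * 1 := mul_le_mul_of_nonneg_left (Real.abs_sin_le_one _) hπ.le
      _ = π := mul_one _
  have hmeas1 : Measurable f1 := Measurable.ite hcondm h1c.abs.measurable measurable_const
  have hmeas2 : Measurable f2 := Measurable.ite hcondm h2c.abs.measurable measurable_const
  have hint1 : Integrable f1 (ρ.prod ρ) := by
    apply Integrable.mono' (integrable_const π) hmeas1.aestronglyMeasurable
    filter_upwards with x
    simp only [hf1, Real.norm_eq_abs]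
    split
    · rw [abs_abs]; exact hb1 x
    · simp [hπ.le]
  have hint2 : Integrable f2 (ρ.prod ρ) := by
    apply Integrable.mono' (integrable_const π) hmeas2.aestronglyMeasurable
    filter_upwards with x
    simp only [hf2, Real.norm_eq_abs]
    split
    · rw [abs_abs]; exact hb2 x
    · simp [hπ.le]
  have hfeq : ∀ x : ℝ×ℝ, (if |ybar x - t| < r then |d1y x| + |d2y x| else 0)
      = f1 x + f2 x := by
    intro x
    by_cases h : |ybar x - t| < r <;> simp [hf1, hf2, h]
  -- inner integral value
  have hval1 : ∫ x, f1 x ∂(ρ.prod ρ) = 2 * (Mfun (t+r) - Mfun (t-r)) := by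
    rw [MeasureTheory.integral_prod_symm f1 hint1]
    have houter : ∀ y ∈ S, (∫ x, f1 (x,y) ∂ρ)
        = 2*(min (Real.sin (π*y)) (t+r) - min (Real.sin (π*y)) (t-r)) := by
      intro y hy
      have hs0 : 0 < Real.sin (π*y) :=
        Real.sin_pos_of_pos_of_lt_pi (by nlinarith [hy.1]) (by nlinarith [hy.2])
      have hs1 : Real.sin (π*y) ≤ 1 := Real.sin_le_one _
      rw [← inner_int hs0 hs1 hr htr]
      apply MeasureTheory.integral_congr_ae (ae_of_all _ ?_)
      intro x
      simp only [hf1]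
      have hcnd : ybar (x,y) = Real.sin (π*x) * Real.sin (π*y) := rfl
      rw [hcnd]
      by_cases h : |Real.sin (π*x) * Real.sin (π*y) - t| < r
      · rw [if_pos h, if_pos h]
        unfold d1y
        rw [abs_mul, abs_mul, abs_of_pos hπ, abs_of_nonneg hs0.le]
      · rw [if_neg h, if_neg h]
    rw [MeasureTheory.setIntegral_congr_fun measurableSet_Ioo houter]
    rw [show (fun y => 2*(min (Real.sin (π*y)) (t+r) - min (Real.sin (π*y)) (t-r)))
      = fun y => 2*((fun y => min (Real.sin (π*y)) (t+r)) y - (fun y => min (Real.sin (π*y)) (t-r)) y) from rfl]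
    have hc1 : Continuous (fun y : ℝ => min (Real.sin (π*y)) (t+r)) := by fun_prop
    have hc2 : Continuous (fun y : ℝ => min (Real.sin (π*y)) (t-r)) := by fun_prop
    have hi1 : IntegrableOn (fun y : ℝ => min (Real.sin (π*y)) (t+r)) S :=
      (hc1.integrableOn_Icc (a:=0) (b:=1)).mono_set Set.Ioo_subset_Icc_self
    have hi2 : IntegrableOn (fun y : ℝ => min (Real.sin (π*y)) (t-r)) S :=
      (hc2.integrableOn_Icc (a:=0) (b:=1)).mono_set Set.Ioo_subset_Icc_self
    rw [MeasureTheory.integral_const_mul, MeasureTheory.integral_sub hi1 hi2,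
      Mint (by linarith) (by linarith), Mint (by linarith) (by linarith)]
  have hswapf : ∀ x : ℝ×ℝ, f2 x = f1 x.swap := by
    intro x
    have hy : ybar x.swap = ybar x := by
      simp only [ybar, Prod.fst_swap, Prod.snd_swap]; ring
    have hd : d1y x.swap = d2y x := by
      simp only [d1y, d2y, Prod.fst_swap, Prod.snd_swap]; ring
    simp only [hf1, hf2, hy, hd]
  have hval2 : ∫ x, f2 x ∂(ρ.prod ρ) = 2 * (Mfun (t+r) - Mfun (t-r)) := by
    rw [show f2 = (fun x => f1 x.swap) from funext hswapf]
    rw [MeasureTheory.integral_prod_swap f1]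
    exact hval1
  calc ∫ x in S ×ˢ S, (if |ybar x - t| < r then |d1y x| + |d2y x| else 0)
      = ∫ x, (f1 x + f2 x) ∂(ρ.prod ρ) := by
        rw [Measure.volume_eq_prod, ← Measure.prod_restrict]
        apply MeasureTheory.integral_congr_ae (ae_of_all _ ?_)
        intro x
        exact hfeq x
    _ = (∫ x, f1 x ∂(ρ.prod ρ)) + ∫ x, f2 x ∂(ρ.prod ρ) :=
        MeasureTheory.integral_add hint1 hint2
    _ = 4 * (Mfun (t+r) - Mfun (t-r)) := by rw [hval1, hval2]; ring

/-- For every fixed `t̄ ∈ (0,1)`, the one-sided limit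
`lim_{r→0⁺} (1/r) ∫_{(0,1)²} 1_{|y−t̄|<r} (|∂₁y| + |∂₂y|) dx` exists and equals
`8 (1 − (2/π) arcsin t̄)`. -/
theorem stmt3 (tbar : ℝ) (ht : tbar ∈ Set.Ioo (0:ℝ) 1) :
    Filter.Tendsto
      (fun r : ℝ => (1 / r) *
        ∫ x in Set.Ioo (0:ℝ) 1 ×ˢ Set.Ioo (0:ℝ) 1,
          (if |ybar x - tbar| < r then |d1y x| + |d2y x| else 0))
      (nhdsWithin (0:ℝ) (Set.Ioi 0))
      (nhds (8 * (1 - 2 / π * Real.arcsin tbar))) := by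
  obtain ⟨ht0, ht1⟩ := ht
  set m : ℝ := 1 - 2/π * Real.arcsin tbar with hm
  have hM : HasDerivAt Mfun m tbar := Mderiv (by linarith) ht1
  have hslope := hasDerivAt_iff_tendsto_slope.mp hM
  have l1 : Tendsto (fun r : ℝ => tbar + r) (nhdsWithin 0 (Set.Ioi 0))
      (nhdsWithin tbar {tbar}ᶜ) := by
    apply tendsto_nhdsWithin_of_tendsto_nhds_of_eventually_within
    · have h : Tendsto (fun r : ℝ => tbar + r) (nhds 0) (nhds tbar) := by
        simpa using (tendsto_const_nhds (x := tbar)).add (tendsto_id (x := nhds (0:ℝ)))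
      exact h.mono_left nhdsWithin_le_nhds
    · filter_upwards [self_mem_nhdsWithin] with r hr
      simp only [Set.mem_compl_iff, Set.mem_singleton_iff]
      intro h
      have : r = 0 := by linarith [congrArg id h]
      exact absurd this (ne_of_gt hr)
  have l2 : Tendsto (fun r : ℝ => tbar - r) (nhdsWithin 0 (Set.Ioi 0))
      (nhdsWithin tbar {tbar}ᶜ) := by
    apply tendsto_nhdsWithin_of_tendsto_nhds_of_eventually_within
    · have h : Tendsto (fun r : ℝ => tbar - r) (nhds 0) (nhds tbar) := by
        simpa using (tendsto_const_nhds (x := tbar)).sub (tendsto_id (x := nhds (0:ℝ)))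
      exact h.mono_left nhdsWithin_le_nhds
    · filter_upwards [self_mem_nhdsWithin] with r hr
      simp only [Set.mem_compl_iff, Set.mem_singleton_iff]
      intro h
      have : r = 0 := by linarith [congrArg id h]
      exact absurd this (ne_of_gt hr)
  have h1 := hslope.comp l1
  have h2 := hslope.comp l2
  have hcomb := (h1.add h2).const_mul (4:ℝ)
  rw [show (4:ℝ) * (m + m) = 8 * m from by ring] at hcomb
  simp only [Function.comp] at hcomb
  rw [show (8:ℝ) * (1 - 2 / π * Real.arcsin tbar) = 8 * m from by rw [hm]]
  apply hcomb.congr'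
  have hε : 0 < min tbar (1 - tbar) := lt_min ht0 (by linarith)
  filter_upwards [Ioo_mem_nhdsGT_of_mem (Set.mem_Ico.mpr ⟨le_refl 0, hε⟩)] with r hr
  obtain ⟨hr0, hrε⟩ := hr
  have hrt : r < tbar := lt_of_lt_of_le hrε (min_le_left _ _)
  have hrt1 : tbar + r < 1 := by
    have := lt_of_lt_of_le hrε (min_le_right _ _); linarith
  have hrne : r ≠ 0 := ne_of_gt hr0
  rw [Gval hr0 hrt hrt1, slope_def_field, slope_def_field]
  simp only [add_sub_cancel_left, sub_sub_cancel_left, div_neg]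
  field_simp
  ring
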